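/- For every positive integer N there exist an injective function f : Fin (2^N) → ℝ and a simple graph G on vertex set Fin (2^N) with exactly N·2^{N−1} edges such that every subset of Fin (2^N) that is reconstructible from G with respect to f has size at most 2. -/

import Mathlib

open Finset

/-- Encode the binary digits of `n` as a base-3 number. -/
def enc : ℕ → ℕ
  | 0 => 0
  | n+1 => 3 * enc ((n+1)/2) + (n+1) % 2
decreasing_by exact Nat.div_lt_self (Nat.succ_pos _) one_lt_two

lemma enc_eq (n : ℕ) : enc n = 3 * enc (n/2) + n % 2 := by
  cases n with
  | zero => simp [enc]
  | succ m => rw [enc]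

lemma enc_eq_zero : ∀ n, enc n = 0 → n = 0 := by
  intro n
  induction n using Nat.strong_induction_on with
  | _ n ih =>
    intro h
    rw [enc_eq] at h
    rcases Nat.eq_zero_or_pos n with h0 | h0
    · exact h0
    · have h1 : enc (n/2) = 0 := by omega
      have := ih (n/2) (Nat.div_lt_self h0 one_lt_two) h1
      omega

lemma enc_inj : Function.Injective enc := by
  intro a
  induction a using Nat.strong_induction_on with
  | _ a ih =>
    intro b h
    rw [enc_eq a, enc_eq b] at h
    have h1 : a % 2 = b % 2 := by omega
    have h2 : enc (a/2) = enc (b/2) := by omega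
    rcases Nat.eq_zero_or_pos a with h0 | h0
    · subst h0
      have : enc (b/2) = 0 := by simpa [enc] using h2.symm
      have := enc_eq_zero _ this
      omega
    · have := ih (a/2) (Nat.div_lt_self h0 one_lt_two) h2
      omega

lemma enc_sum : ∀ (n x : ℕ), x < 2^n →
    enc x = ∑ b ∈ Finset.range n, if x.testBit b then 3^b else 0 := by
  intro n
  induction n with
  | zero => intro x hx; interval_cases x; simp [enc]
  | succ n ih =>
    intro x hx
    have h2 : (2:ℕ)^(n+1) = 2^n * 2 := pow_succ 2 n
    have hx2 : x / 2 < 2^n := by omega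
    rw [enc_eq, ih (x/2) hx2, Finset.sum_range_succ', Finset.mul_sum]
    congr 1
    · refine Finset.sum_congr rfl fun b _ => ?_
      rw [Nat.testBit_add_one]
      split <;> ring
    · rcases Nat.even_or_odd x with he | ho
      · have : x % 2 = 0 := Nat.even_iff.1 he
        simp [Nat.testBit_zero, this]
      · have : x % 2 = 1 := Nat.odd_iff.1 ho
        simp [Nat.testBit_zero, this]

lemma enc_xor {N k x : ℕ} (hk : k < N) (hx : x < 2^N) :
    (enc (x ^^^ 2^k) : ℤ) = enc x + (if x.testBit k then -(3^k : ℤ) else 3^k) := by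
  have hy : x ^^^ 2^k < 2^N :=
    Nat.xor_lt_two_pow hx (Nat.pow_lt_pow_right one_lt_two hk)
  rw [enc_sum N _ hy, enc_sum N x hx]
  push_cast
  rw [← Finset.add_sum_erase _ _ (Finset.mem_range.2 hk),
      ← Finset.add_sum_erase _ _ (Finset.mem_range.2 hk)]
  have hterms : (∑ b ∈ (range N).erase k, (if (x ^^^ 2^k).testBit b then (3:ℤ)^b else 0))
      = ∑ b ∈ (range N).erase k, (if x.testBit b then (3:ℤ)^b else 0) := by
    refine Finset.sum_congr rfl fun b hb => ?_
    have hbk : k ≠ b := fun h => (Finset.mem_erase.1 hb).1 h.symm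
    simp [Nat.testBit_xor, Nat.testBit_two_pow, hbk]
  rw [hterms]
  have hbit : (x ^^^ 2^k).testBit k = !x.testBit k := by
    simp [Nat.testBit_xor, Nat.testBit_two_pow]
  rw [hbit]
  cases hxk : x.testBit k <;> simp <;> ring

lemma enc_xor' {N k x : ℕ} (hk : k < N) (hx : x < 2^N) :
    (enc (x ^^^ 2^k) : ℝ) = enc x + (if x.testBit k then -(3^k : ℝ) else 3^k) := by
  have := enc_xor hk hx
  cases hxk : x.testBit k <;> rw [hxk] at this <;> simp at this ⊢ <;> exact_mod_cast this



/-- The distance between `u` and `v` is reconstructible from `G` w.r.t. `f`. -/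
def distRecon {n : ℕ} (f : Fin n → ℝ) (G : SimpleGraph (Fin n)) (u v : Fin n) : Prop :=
  ∀ g : Fin n → ℝ, Function.Injective g →
    (∀ i j, G.Adj i j → |g i - g j| = |f i - f j|) → |g u - g v| = |f u - f v|

/-- A subset `V'` is reconstructible from `G` w.r.t. `f`. -/
def setRecon {n : ℕ} (f : Fin n → ℝ) (G : SimpleGraph (Fin n)) (V' : Finset (Fin n)) : Prop :=
  ∀ u ∈ V', ∀ v ∈ V', distRecon f G u v

/-- For every positive `N` there are an injective `f : Fin 2^N → ℝ` and a graph `G` on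
`Fin 2^N` with exactly `N·2^{N-1}` edges such that every reconstructible subset has size at
most `2`. -/
theorem stmt3 (N : ℕ) (hN : 0 < N) :
    ∃ (f : Fin (2 ^ N) → ℝ) (G : SimpleGraph (Fin (2 ^ N))),
      Function.Injective f ∧
      Nat.card G.edgeSet = N * 2 ^ (N - 1) ∧
      ∀ V' : Finset (Fin (2 ^ N)), setRecon f G V' → V'.card ≤ 2 := by
  classical
  set f : Fin (2^N) → ℝ := fun i => (enc i.val : ℝ) with hf
  have hfinj : Function.Injective f := by
    intro a b h
    exact Fin.ext (enc_inj (Nat.cast_injective h))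
  set G : SimpleGraph (Fin (2^N)) :=
    { Adj := fun i j => ∃ k < N, i.val ^^^ 2^k = j.val
      symm := by
        constructor
        rintro i j ⟨k, hk, h⟩
        exact ⟨k, hk, by rw [← h, xor_cancel_right]⟩
      loopless := by
        constructor
        rintro i ⟨k, hk, h⟩
        have h2 : i.val ^^^ (2^k) ^^^ i.val = 0 := by rw [h, Nat.xor_self]
        rw [Nat.xor_comm (i.val) (2^k), xor_cancel_right] at h2
        exact (Nat.pow_pos (n := k) two_pos).ne' h2 } with hG
  refine ⟨f, G, hfinj, ?_, ?_⟩
  · -- edge count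
    have hdeg : ∀ x : Fin (2^N), G.degree x = N := by
      intro x
      have hbij : (Finset.range N).card = (G.neighborFinset x).card := by
        refine Finset.card_bij
          (fun k hk => (⟨x.val ^^^ 2^k,
            Nat.xor_lt_two_pow x.isLt
              (Nat.pow_lt_pow_right one_lt_two (Finset.mem_range.1 hk))⟩ : Fin (2^N)))
          ?_ ?_ ?_
        · intro k hk
          rw [SimpleGraph.mem_neighborFinset]
          exact ⟨k, Finset.mem_range.1 hk, rfl⟩
        · intro k hk l hl h
          have h' : x.val ^^^ 2^k = x.val ^^^ 2^l := congrArg Fin.val h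
          have h'' := Nat.xor_right_injective h'
          exact Nat.pow_right_injective le_rfl h''
        · intro j hj
          rw [SimpleGraph.mem_neighborFinset] at hj
          obtain ⟨k, hk, h⟩ := hj
          exact ⟨k, Finset.mem_range.2 hk, Fin.ext h⟩
      rw [← SimpleGraph.card_neighborFinset_eq_degree, ← hbij, Finset.card_range]
    have hsum := SimpleGraph.sum_degrees_eq_twice_card_edges G
    have hcardsum : ∑ v : Fin (2^N), G.degree v = 2^N * N := by
      simp [hdeg, Finset.sum_const]
    have hN2 : (2:ℕ)^N = 2 * 2^(N-1) := by
      obtain ⟨M, rfl⟩ : ∃ M, N = M + 1 := ⟨N - 1, by omega⟩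
      simp [pow_succ, Nat.mul_comm]
    have hE : G.edgeFinset.card = N * 2^(N-1) := by
      have h1 : 2 * G.edgeFinset.card = 2 * (N * 2^(N-1)) := by
        rw [← hsum, hcardsum, hN2]; ring
      omega
    rw [Nat.card_eq_fintype_card, ← SimpleGraph.edgeFinset_card]
    exact hE
  · -- reconstructible sets are small
    intro V' hrec
    by_contra hcard
    push_neg at hcard
    obtain ⟨u, v, w, hu, hv, hw, huv, huw, hvw⟩ := Finset.two_lt_card_iff.1 hcard
    -- main claim
    have hmain : ∀ a b : Fin (2^N), a ∈ V' → b ∈ V' → a ≠ b →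
        (∀ j, a.val ^^^ b.val ≠ 2^j) → False := by
      intro a b ha hb hab hpow
      have hne0 : a.val ^^^ b.val ≠ 0 := by
        intro h
        have : a.val = b.val := by
          have := congrArg (· ^^^ b.val) h
          simpa [xor_cancel_right] using this
        exact hab (Fin.ext this)
      obtain ⟨k, hkbit⟩ : ∃ k, (a.val ^^^ b.val).testBit k = true := by
        by_contra h
        push_neg at h
        exact hne0 (Nat.eq_of_testBit_eq fun i => by
          simp [Bool.eq_false_iff.2 (fun hh => (h i) hh)])
      have hxor_lt : a.val ^^^ b.val < 2^N := Nat.xor_lt_two_pow a.isLt b.isLt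
      have hk : k < N := by
        by_contra hkN
        push_neg at hkN
        have : (a.val ^^^ b.val) < 2^k :=
          lt_of_lt_of_le hxor_lt (Nat.pow_le_pow_right two_pos hkN)
        rw [Nat.testBit_lt_two_pow this] at hkbit
        exact Bool.false_ne_true hkbit
      set g : Fin (2^N) → ℝ := fun x => (enc (x.val ^^^ 2^k) : ℝ) with hg
      have hginj : Function.Injective g := by
        intro p q h
        have := enc_inj (Nat.cast_injective h)
        exact Fin.ext (Nat.xor_left_injective this)
      have hgedge : ∀ i j, G.Adj i j → |g i - g j| = |f i - f j| := by
        rintro i j ⟨m, hm, hij⟩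
        by_cases hmk : m = k
        · subst hmk
          have hji : j.val ^^^ 2^m = i.val := by rw [← hij, xor_cancel_right]
          show |(enc (i.val ^^^ 2^m) : ℝ) - enc (j.val ^^^ 2^m)| = _
          rw [hij, hji, abs_sub_comm]
        · have e1 := enc_xor' hm i.isLt
          have hx2 : i.val ^^^ 2^k < 2^N :=
            Nat.xor_lt_two_pow i.isLt (Nat.pow_lt_pow_right one_lt_two hk)
          have e2 := enc_xor' hm hx2
          have hbit : (i.val ^^^ 2^k).testBit m = i.val.testBit m := by
            simp [Nat.testBit_xor, Nat.testBit_two_pow, Ne.symm hmk]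
          rw [hbit] at e2
          have hjk : j.val ^^^ 2^k = (i.val ^^^ 2^k) ^^^ 2^m := by
            rw [← hij, Nat.xor_assoc, Nat.xor_comm (2^m), ← Nat.xor_assoc]
          show |(enc (i.val ^^^ 2^k) : ℝ) - enc (j.val ^^^ 2^k)| = |(enc i.val : ℝ) - enc j.val|
          rw [hjk, e2, ← hij, e1]
          ring_nf
      have habs := hrec a ha b hb g hginj hgedge
      -- compute
      have hANlt := a.isLt
      have ea := enc_xor' hk a.isLt
      have eb := enc_xor' hk b.isLt
      have hbitne : a.val.testBit k ≠ b.val.testBit k := by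
        intro h
        rw [Nat.testBit_xor, h] at hkbit
        simp at hkbit
      set ε : ℝ := if a.val.testBit k then -(3^k : ℝ) else 3^k with hε
      have hεb : (if b.val.testBit k then -(3^k : ℝ) else 3^k) = -ε := by
        rw [hε]
        cases hA : a.val.testBit k <;> cases hB : b.val.testBit k <;>
          simp_all
      rw [hεb] at eb
      have hεne : ε ≠ 0 := by
        rw [hε]
        have : (0:ℝ) < 3^k := by positivity
        split <;> intro h <;> linarith
      show False
      rw [show g a = (enc a.val : ℝ) + ε from ea,
          show g b = (enc b.val : ℝ) + -ε from eb] at habs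
      have hfab : g a - g b = (f a - f b) + 2*ε := by
        rw [show g a = (enc a.val : ℝ) + ε from ea,
            show g b = (enc b.val : ℝ) + -ε from eb]
        simp [hf]; ring
      have hfa : f a = (enc a.val : ℝ) := rfl
      have hfb : f b = (enc b.val : ℝ) := rfl
      rcases abs_eq_abs.1 habs with h | h
      · rw [hfa, hfb] at h
        have : ε = 0 := by linarith
        exact hεne this
      · rw [hfa, hfb] at h
        have hcontra : (enc a.val : ℝ) = (enc b.val : ℝ) + -ε := by linarith
        rw [← eb] at hcontra
        have heq := enc_inj (Nat.cast_injective hcontra)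
        have hfin : a.val ^^^ b.val = 2^k := by
          rw [heq, Nat.xor_comm, ← Nat.xor_assoc, Nat.xor_self, Nat.zero_xor]
        exact hpow k hfin
    by_cases h1 : ∃ j, u.val ^^^ v.val = 2^j
    · by_cases h2 : ∃ j, u.val ^^^ w.val = 2^j
      · obtain ⟨j1, hj1⟩ := h1
        obtain ⟨j2, hj2⟩ := h2
        have hj12 : j1 ≠ j2 := by
          intro h
          subst h
          have : u.val ^^^ v.val = u.val ^^^ w.val := hj1.trans hj2.symm
          exact hvw (Fin.ext (Nat.xor_right_injective this))
        have hvw2 : v.val ^^^ w.val = 2^j1 ^^^ 2^j2 := by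
          rw [← hj1, ← hj2]
          rw [Nat.xor_comm (u.val) (v.val), Nat.xor_assoc, xor_cancel_left]
        refine hmain v w hv hw hvw ?_
        intro j hj
        rw [hvw2] at hj
        have hb1 : (2^j1 ^^^ 2^j2).testBit j1 = true := by
          simp [Nat.testBit_xor, Nat.testBit_two_pow, Ne.symm hj12]
        have hb2 : (2^j1 ^^^ 2^j2).testBit j2 = true := by
          simp [Nat.testBit_xor, Nat.testBit_two_pow, hj12]
        rw [hj] at hb1 hb2
        rw [Nat.testBit_two_pow] at hb1 hb2
        simp at hb1 hb2
        exact hj12 (hb1.symm.trans hb2)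
      · push_neg at h2
        exact hmain u w hu hw huw h2
    · push_neg at h1
      exact hmain u v hu hv huv h1
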